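/- The Goryachev–Chaplygin Hamiltonian H = J₁² + J₂² + 4J₃² + c·x₁ and the cubic function K = 2(J₁² + J₂²)J₃ − c·x₃J₁ satisfy {H,K} = 0 on the subset of ℝ⁶ where x₁J₁ + x₂J₂ + x₃J₃ = 0. -/

import Mathlib

open scoped BigOperators

/-- Index of `x_i` (i = 0,1,2) in phase space `ℝ⁶ = Fin 6 → ℝ`. -/
def xIdx (i : Fin 3) : Fin 6 := ⟨i.1, by omega⟩
/-- Index of `J_i` (i = 0,1,2) in phase space. -/
def jIdx (i : Fin 3) : Fin 6 := ⟨i.1 + 3, by omega⟩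

/-- Partial derivative of `F` in the `i`-th coordinate direction. -/
noncomputable def pd (i : Fin 6) (F : (Fin 6 → ℝ) → ℝ) (z : Fin 6 → ℝ) : ℝ :=
  fderiv ℝ F z (Pi.single i 1)

/-- Levi-Civita symbol on `Fin 3`. -/
def eps (i j k : Fin 3) : ℝ :=
  if (i,j,k) = (0,1,2) ∨ (i,j,k) = (1,2,0) ∨ (i,j,k) = (2,0,1) then 1
  else if (i,j,k) = (1,0,2) ∨ (i,j,k) = (2,1,0) ∨ (i,j,k) = (0,2,1) then -1
  else 0

/-- The e(3) Poisson bracket on smooth functions of `(x, J) ∈ ℝ⁶`, generated by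
`{J_i,J_j} = ε_{ijk} J_k`, `{J_i,x_j} = ε_{ijk} x_k`, `{x_i,x_j} = 0`. -/
noncomputable def e3Bracket (F G : (Fin 6 → ℝ) → ℝ) (z : Fin 6 → ℝ) : ℝ :=
  ∑ i : Fin 3, ∑ j : Fin 3, ∑ k : Fin 3, eps i j k *
    ( z (jIdx k) * pd (jIdx i) F z * pd (jIdx j) G z
    + z (xIdx k) * pd (jIdx i) F z * pd (xIdx j) G z
    + z (xIdx k) * pd (xIdx i) F z * pd (jIdx j) G z )

/-- The Goryachev–Chaplygin Hamiltonian `H = J₁²+J₂²+4J₃²+c x₁` and the cubic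
integral `K = 2(J₁²+J₂²)J₃ − c x₃ J₁` satisfy `{H,K} = 0` wherever `x·J = 0`. -/
theorem goryachev_chaplygin_commute (c : ℝ)
    (H K : (Fin 6 → ℝ) → ℝ)
    (hH : H = fun z => (z (jIdx 0))^2 + (z (jIdx 1))^2 + 4*(z (jIdx 2))^2 + c * z (xIdx 0))
    (hK : K = fun z => 2*((z (jIdx 0))^2 + (z (jIdx 1))^2) * z (jIdx 2)
                        - c * z (xIdx 2) * z (jIdx 0)) :
    ∀ z : Fin 6 → ℝ,
      z (xIdx 0) * z (jIdx 0) + z (xIdx 1) * z (jIdx 1) + z (xIdx 2) * z (jIdx 2) = 0 →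
      e3Bracket H K z = 0 := by
  intro z hz
  have hj : ∀ a : Fin 6, HasFDerivAt (fun w : Fin 6 → ℝ => w a)
      (ContinuousLinearMap.proj a : (Fin 6 → ℝ) →L[ℝ] ℝ) z := fun a =>
    hasFDerivAt_apply (𝕜 := ℝ) a z
  have HD := ((((hj (jIdx 0)).mul (hj (jIdx 0))).add ((hj (jIdx 1)).mul (hj (jIdx 1)))).add
      (((hj (jIdx 2)).mul (hj (jIdx 2))).const_mul 4)).add ((hj (xIdx 0)).const_mul c)
  have KD := (((((hj (jIdx 0)).mul (hj (jIdx 0))).add ((hj (jIdx 1)).mul (hj (jIdx 1)))).const_mul 2).mul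
      (hj (jIdx 2))).sub (((hj (xIdx 2)).const_mul c).mul (hj (jIdx 0)))
  simp only [Pi.mul_def, Pi.add_def, Pi.sub_def] at HD KD
  subst hH hK
  simp only [e3Bracket, Fin.sum_univ_three, pd, pow_two, HD.fderiv, KD.fderiv]
  simp only [ContinuousLinearMap.add_apply, ContinuousLinearMap.sub_apply,
    ContinuousLinearMap.smul_apply, ContinuousLinearMap.coe_smul', Pi.smul_apply,
    ContinuousLinearMap.proj_apply, Pi.single_apply, smul_eq_mul, eps,
    jIdx, xIdx, Fin.ext_iff]
  norm_num [Prod.ext_iff, Fin.ext_iff]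
  norm_num [jIdx, xIdx] at hz ⊢
  linear_combination (-2*c*z ⟨4, by omega⟩) * hz
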